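/- Let d ≥ 1 be an integer, R > 0, and let K : [0,∞) → ℝ be a bounded, nonnegative, measurable function supported in [0,R]. For j ≥ 1 set m_{K,j} := ∫₀^R s^{j−1} K(s) ds and assume m_{K,d} > 0; define the kernel moment ratios B_p := m_{K,d+p}/m_{K,d}. Set c₁ᵈ = 2d, c₂ᵈ = 8d², c₃ᵈ = 4d(d−1). Let F : [0,∞) → ℝ be continuous with F(t) = τ₂ t² + τ₄ t⁴ + τ₆ t⁶ + o(t⁶) as t → 0⁺, define the kernel average I_F(h) := (∫₀^R u^{d−1} K(u) F(hu) du)/m_{K,d}, the sample-side curvature combination Ψ_F(h) := c₂ᵈ I_F(h) − c₃ᵈ I_F(√2 h) − c₁ᵈ I_F(2h), and the stochastic curvature combination φ₂(a) := c₂ᵈ F(a) − c₃ᵈ F(√2 a) − c₁ᵈ F(2a). Then, as h → 0⁺, Ψ_F(h) − φ₂(B₄^{1/4} h) = −24 d (d+4) τ₆ (B₆ − B₄^{3/2}) h⁶ + o(h⁶); in particular the O(h²) and O(h⁴) terms cancel and the curvature combination is asymptotically unbiased. -/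

import Mathlib

open MeasureTheory Filter Topology Asymptotics

/-- Mean of the sample curvature constraint, differentiable case: the `O(h²)` and `O(h⁴)`
terms cancel and `Ψ_F(h) − φ₂(B₄^{1/4} h) = −24 d (d+4) τ₆ (B₆ − B₄^{3/2}) h⁶ + o(h⁶)`
as `h → 0⁺`. -/
theorem stmt_13 (d : ℕ) (hd : 1 ≤ d) (R : ℝ) (hR : 0 < R)
    (K : ℝ → ℝ) (hKmeas : Measurable K) (hKnonneg : ∀ s, 0 ≤ K s)
    (hKbdd : ∃ M, ∀ s, K s ≤ M)
    (hKsupp : ∀ s, R < s → K s = 0)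
    (mK : ℕ → ℝ) (hmK : ∀ j, mK j = ∫ s in (0:ℝ)..R, s ^ (j - 1) * K s)
    (hmKd : 0 < mK d)
    (B : ℕ → ℝ) (hB : ∀ p, B p = mK (d + p) / mK d)
    (c1 c2 c3 : ℝ) (hc1 : c1 = 2 * (d : ℝ)) (hc2 : c2 = 8 * (d : ℝ) ^ 2)
    (hc3 : c3 = 4 * (d : ℝ) * ((d : ℝ) - 1))
    (F : ℝ → ℝ) (hFcont : ContinuousOn F (Set.Ici 0))
    (τ₂ τ₄ τ₆ : ℝ)
    (hF : (fun t => F t - (τ₂ * t ^ 2 + τ₄ * t ^ 4 + τ₆ * t ^ 6))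
      =o[𝓝[>] (0:ℝ)] fun t => t ^ 6)
    (IF : ℝ → ℝ)
    (hIF : ∀ h, IF h = (∫ u in (0:ℝ)..R, u ^ (d - 1) * K u * F (h * u)) / mK d)
    (Ψ : ℝ → ℝ)
    (hΨ : ∀ h, Ψ h = c2 * IF h - c3 * IF (Real.sqrt 2 * h) - c1 * IF (2 * h))
    (φ₂ : ℝ → ℝ)
    (hφ₂ : ∀ a, φ₂ a = c2 * F a - c3 * F (Real.sqrt 2 * a) - c1 * F (2 * a)) :
    (fun h => Ψ h - φ₂ ((B 4) ^ ((1:ℝ)/4) * h)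
        - (-(24 * (d : ℝ) * ((d : ℝ) + 4)) * τ₆ * (B 6 - (B 4) ^ ((3:ℝ)/2)) * h ^ 6))
      =o[𝓝[>] (0:ℝ)] fun h => h ^ 6 := by
  obtain ⟨M, hM⟩ := hKbdd
  have hM0 : (0:ℝ) ≤ M := le_trans (hKnonneg 0) (hM 0)
  -- integrability of the moment integrands
  have key_int : ∀ p : ℕ, IntervalIntegrable (fun u => u ^ p * K u) volume 0 R := by
    intro p
    rw [intervalIntegrable_iff, Set.uIoc_of_le hR.le]
    refine ⟨((measurable_id.pow_const p).mul hKmeas).aestronglyMeasurable.restrict, ?_⟩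
    refine HasFiniteIntegral.restrict_of_bounded (C := R ^ p * M) measure_Ioc_lt_top ?_
    refine (ae_restrict_iff' measurableSet_Ioc).mpr (Filter.Eventually.of_forall ?_)
    intro u hu
    have h1 : (0:ℝ) ≤ u := le_of_lt hu.1
    have hnn : (0:ℝ) ≤ u ^ p * K u := mul_nonneg (pow_nonneg h1 p) (hKnonneg u)
    rw [Real.norm_of_nonneg hnn]
    exact mul_le_mul (pow_le_pow_left₀ h1 hu.2 p) (hM u) (hKnonneg u) (by positivity)
  have mom_nonneg : ∀ j : ℕ, 0 ≤ mK j := by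
    intro j
    rw [hmK j]
    apply intervalIntegral.integral_nonneg hR.le
    intro u hu
    exact mul_nonneg (pow_nonneg hu.1 _) (hKnonneg u)
  -- the moment identity
  have mom : ∀ (p : ℕ) (g : ℝ),
      (∫ u in (0:ℝ)..R, u ^ (d-1) * K u * (g*u)^p) = g^p * mK (d+p) := by
    intro p g
    rw [hmK (d+p), ← intervalIntegral.integral_const_mul]
    apply intervalIntegral.integral_congr
    intro u _
    simp only
    have e : d + p - 1 = (d - 1) + p := by omega
    rw [e, pow_add, mul_pow]
    ring
  set r : ℝ → ℝ := fun t => F t - (τ₂ * t ^ 2 + τ₄ * t ^ 4 + τ₆ * t ^ 6) with hr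
  have hrdef : ∀ t, r t = F t - (τ₂ * t ^ 2 + τ₄ * t ^ 4 + τ₆ * t ^ 6) := fun t => by rw [hr]
  have hFr : ∀ x : ℝ, F x = τ₂ * x ^ 2 + τ₄ * x ^ 4 + τ₆ * x ^ 6 + r x := by
    intro x; rw [hrdef]; ring
  -- integrability of the F-integrand
  have hFc : ∀ g : ℝ, 0 ≤ g →
      IntervalIntegrable (fun u => u ^ (d-1) * K u * F (g*u)) volume 0 R := by
    intro g hg
    have hcomp : ContinuousOn (fun u : ℝ => F (g*u)) (Set.Icc 0 R) := by
      apply hFcont.comp ((continuous_const.mul continuous_id).continuousOn)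
      intro u hu
      exact mul_nonneg hg hu.1
    obtain ⟨C, hC⟩ := (isCompact_Icc (a := (0:ℝ)) (b := R)).exists_bound_of_continuousOn hcomp
    rw [intervalIntegrable_iff, Set.uIoc_of_le hR.le]
    constructor
    · apply AEMeasurable.aestronglyMeasurable
      apply AEMeasurable.mul
      · exact ((measurable_id.pow_const _).mul hKmeas).aemeasurable
      · exact (hcomp.aemeasurable measurableSet_Icc).mono_measure
          (Measure.restrict_mono Set.Ioc_subset_Icc_self le_rfl)
    · refine HasFiniteIntegral.restrict_of_bounded (C := R ^ (d-1) * M * C) measure_Ioc_lt_top ?_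
      refine (ae_restrict_iff' measurableSet_Ioc).mpr (Filter.Eventually.of_forall ?_)
      intro u hu
      have h1 : (0:ℝ) ≤ u := le_of_lt hu.1
      have hC0 : ‖F (g*u)‖ ≤ C := hC u ⟨h1, hu.2⟩
      calc ‖u ^ (d-1) * K u * F (g*u)‖ = (u ^ (d-1) * K u) * ‖F (g*u)‖ := by
            rw [norm_mul]
            congr 1
            exact Real.norm_of_nonneg (mul_nonneg (pow_nonneg h1 _) (hKnonneg u))
        _ ≤ (R ^ (d-1) * M) * C := by
            apply mul_le_mul _ hC0 (norm_nonneg _) (by positivity)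
            exact mul_le_mul (pow_le_pow_left₀ h1 hu.2 _) (hM u) (hKnonneg u) (by positivity)
  have e_int : ∀ (g : ℝ) (p : ℕ),
      IntervalIntegrable (fun u => u ^ (d-1) * K u * (g*u)^p) volume 0 R := by
    intro g p
    have hfun : (fun u : ℝ => u ^ (d-1) * K u * (g*u)^p)
        = fun u => g^p * (u ^ ((d-1)+p) * K u) := by
      funext u; rw [pow_add, mul_pow]; ring
    rw [hfun]
    exact (key_int ((d-1)+p)).const_mul _
  have hrInt : ∀ g : ℝ, 0 ≤ g →
      IntervalIntegrable (fun u => u ^ (d-1) * K u * r (g*u)) volume 0 R := by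
    intro g hg
    have hfun : (fun u : ℝ => u ^ (d-1) * K u * r (g*u)) = fun u =>
        (u ^ (d-1) * K u * F (g*u)) - (τ₂ * (u ^ (d-1) * K u * (g*u)^2)
          + (τ₄ * (u ^ (d-1) * K u * (g*u)^4) + τ₆ * (u ^ (d-1) * K u * (g*u)^6))) := by
      funext u; rw [hrdef]; ring
    rw [hfun]
    exact (hFc g hg).sub (((e_int g 2).const_mul τ₂).add
      (((e_int g 4).const_mul τ₄).add ((e_int g 6).const_mul τ₆)))
  set J : ℝ → ℝ := fun g => (∫ u in (0:ℝ)..R, u ^ (d-1) * K u * r (g*u)) / mK d with hJ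
  -- expansion of IF
  have IFeq : ∀ g : ℝ, 0 ≤ g → IF g = τ₂ * g^2 * B 2 + τ₄ * g^4 * B 4 + τ₆ * g^6 * B 6
      + J g := by
    intro g hg
    rw [hIF, hJ]
    have hfun : Set.EqOn (fun u : ℝ => u ^ (d-1) * K u * F (g*u))
        (fun u => (τ₂ * (u ^ (d-1) * K u * (g*u)^2) + (τ₄ * (u ^ (d-1) * K u * (g*u)^4)
          + τ₆ * (u ^ (d-1) * K u * (g*u)^6))) + u ^ (d-1) * K u * r (g*u))
        (Set.uIcc 0 R) := by
      intro u _
      simp only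
      rw [hrdef]
      ring
    rw [intervalIntegral.integral_congr hfun]
    rw [intervalIntegral.integral_add (((e_int g 2).const_mul τ₂).add
      (((e_int g 4).const_mul τ₄).add ((e_int g 6).const_mul τ₆))) (hrInt g hg)]
    rw [intervalIntegral.integral_add ((e_int g 2).const_mul τ₂)
      (((e_int g 4).const_mul τ₄).add ((e_int g 6).const_mul τ₆))]
    rw [intervalIntegral.integral_add ((e_int g 4).const_mul τ₄) ((e_int g 6).const_mul τ₆)]
    rw [intervalIntegral.integral_const_mul, intervalIntegral.integral_const_mul,
      intervalIntegral.integral_const_mul, mom 2 g, mom 4 g, mom 6 g, hB 2, hB 4, hB 6]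
    field_simp
    ring
  -- the remainder integral is o(h^6)
  have EInt_o : (fun h : ℝ => ∫ u in (0:ℝ)..R, u ^ (d-1) * K u * r (h*u))
      =o[𝓝[>] (0:ℝ)] (fun h => h^6) := by
    rw [isLittleO_iff]
    intro ε hε
    have hm6 : 0 ≤ mK (d+6) := mom_nonneg (d+6)
    have hε' : 0 < ε / (mK (d+6) + 1) := by positivity
    have Hr := hF.def hε'
    rw [eventually_nhdsWithin_iff, Metric.eventually_nhds_iff] at Hr
    obtain ⟨δ, hδ, Hr⟩ := Hr
    have hδR : 0 < δ / R := div_pos hδ hR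
    filter_upwards [Ioo_mem_nhdsGT hδR] with h hh
    have hhpos : 0 < h := hh.1
    have bnd : ∀ u ∈ Set.Ioc (0:ℝ) R, ‖u ^ (d-1) * K u * r (h*u)‖
        ≤ (ε / (mK (d+6) + 1)) * h^6 * (u ^ (d+6-1) * K u) := by
      intro u hu
      have hu0 : 0 < u := hu.1
      have harg : 0 < h*u := mul_pos hhpos hu0
      have hlt : dist (h*u) 0 < δ := by
        rw [Real.dist_eq, sub_zero, abs_of_pos harg]
        calc h*u ≤ h*R := by nlinarith [hu.2]
          _ < (δ/R)*R := by nlinarith [hh.2]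
          _ = δ := by field_simp
      have hrb := Hr hlt harg
      calc ‖u ^ (d-1) * K u * r (h*u)‖ = (u ^ (d-1) * K u) * ‖r (h*u)‖ := by
            rw [norm_mul]
            congr 1
            exact Real.norm_of_nonneg (mul_nonneg (pow_nonneg hu0.le _) (hKnonneg u))
        _ ≤ (u ^ (d-1) * K u) * ((ε / (mK (d+6) + 1)) * ‖(h*u)^6‖) :=
            mul_le_mul_of_nonneg_left hrb (mul_nonneg (pow_nonneg hu0.le _) (hKnonneg u))
        _ = (ε / (mK (d+6) + 1)) * h^6 * (u ^ (d+6-1) * K u) := by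
            rw [Real.norm_of_nonneg (by positivity)]
            have e : d + 6 - 1 = (d - 1) + 6 := by omega
            rw [e, pow_add, mul_pow]
            ring
    have h6 : (0:ℝ) ≤ h^6 := by positivity
    calc ‖∫ u in (0:ℝ)..R, u ^ (d-1) * K u * r (h*u)‖
        ≤ |∫ u in (0:ℝ)..R, (ε / (mK (d+6) + 1)) * h^6 * (u ^ (d+6-1) * K u)| := by
          apply intervalIntegral.norm_integral_le_abs_of_norm_le
          · rw [Set.uIoc_of_le hR.le]
            exact (ae_restrict_iff' measurableSet_Ioc).mpr (Filter.Eventually.of_forall bnd)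
          · exact (key_int (d+6-1)).const_mul _
      _ = (ε / (mK (d+6) + 1)) * h^6 * mK (d+6) := by
          rw [intervalIntegral.integral_const_mul, ← hmK (d+6)]
          exact abs_of_nonneg (by positivity)
      _ ≤ ε * ‖h^6‖ := by
          rw [Real.norm_of_nonneg h6]
          rw [div_mul_eq_mul_div, div_mul_eq_mul_div, div_le_iff₀ (by positivity)]
          nlinarith [mul_nonneg hε.le h6]
  -- positivity of B 4
  have hmK4 : 0 < mK (d+4) := by
    rcases lt_or_eq_of_le (mom_nonneg (d+4)) with hlt | heq
    · exact hlt
    · exfalso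
      have hInt : IntegrableOn (fun s : ℝ => s ^ (d+4-1) * K s) (Set.Ioc 0 R) volume := by
        have := key_int (d+4-1)
        rwa [intervalIntegrable_iff, Set.uIoc_of_le hR.le] at this
      have hnn : 0 ≤ᵐ[volume.restrict (Set.Ioc (0:ℝ) R)] fun s => s ^ (d+4-1) * K s :=
        (ae_restrict_iff' measurableSet_Ioc).mpr (Filter.Eventually.of_forall
          fun s hs => mul_nonneg (pow_nonneg hs.1.le _) (hKnonneg s))
      have hz0 : ∫ s in Set.Ioc (0:ℝ) R, s ^ (d+4-1) * K s = 0 := by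
        have h4 := hmK (d+4)
        rw [intervalIntegral.integral_of_le hR.le] at h4
        rw [← h4, ← heq]
      have hz := (integral_eq_zero_iff_of_nonneg_ae hnn hInt).mp hz0
      have hmKd0 : mK d = 0 := by
        rw [hmK d, intervalIntegral.integral_of_le hR.le]
        apply MeasureTheory.integral_eq_zero_of_ae
        filter_upwards [hz, ae_restrict_mem measurableSet_Ioc] with s hs1 hs2
        have hKs : K s = 0 := by
          by_contra hK
          have : 0 < s ^ (d+4-1) * K s :=
            mul_pos (pow_pos hs2.1 _) (lt_of_le_of_ne (hKnonneg s) (Ne.symm hK))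
          exact absurd hs1 this.ne'
        simp [hKs]
      linarith
  have B4pos : 0 < B 4 := by rw [hB]; exact div_pos hmK4 hmKd
  set b : ℝ := (B 4) ^ ((1:ℝ)/4) with hbdef
  have hbpos : 0 < b := Real.rpow_pos_of_pos B4pos _
  have hb4 : b ^ (4:ℕ) = B 4 := by
    rw [hbdef, ← Real.rpow_natCast ((B 4) ^ ((1:ℝ)/4)) 4, ← Real.rpow_mul B4pos.le]
    norm_num
  have hb6 : b ^ (6:ℕ) = (B 4) ^ ((3:ℝ)/2) := by
    rw [hbdef, ← Real.rpow_natCast ((B 4) ^ ((1:ℝ)/4)) 6, ← Real.rpow_mul B4pos.le]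
    norm_num
  -- composition with positive scaling
  have comp : ∀ (c : ℝ), 0 < c → ∀ (f : ℝ → ℝ), f =o[𝓝[>] (0:ℝ)] (fun t => t^6) →
      (fun h : ℝ => f (c*h)) =o[𝓝[>] (0:ℝ)] (fun h => h^6) := by
    intro c hc f hf'
    have ht : Tendsto (fun h : ℝ => c*h) (𝓝[>] (0:ℝ)) (𝓝[>] (0:ℝ)) := by
      apply tendsto_nhdsWithin_of_tendsto_nhds_of_eventually_within
      · have h0 : Tendsto (fun h : ℝ => c*h) (𝓝 0) (𝓝 (c*0)) :=
          (continuous_const.mul continuous_id).tendsto 0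
        rw [mul_zero] at h0
        exact h0.mono_left nhdsWithin_le_nhds
      · filter_upwards [self_mem_nhdsWithin] with x hx
        exact mul_pos hc hx
    have h1 := hf'.comp_tendsto ht
    have h2 : ((fun t : ℝ => t^6) ∘ (fun h : ℝ => c*h)) = fun h : ℝ => c^6 * h^6 := by
      funext x; simp [Function.comp]; ring
    rw [h2] at h1
    have h3 := (isLittleO_const_mul_right_iff (c := c^6) (pow_ne_zero 6 hc.ne')).mp h1
    simpa [Function.comp_def] using h3
  have Jo : J =o[𝓝[>] (0:ℝ)] (fun h => h^6) := by
    have hfun : J = fun g => (mK d)⁻¹ * (∫ u in (0:ℝ)..R, u ^ (d-1) * K u * r (g*u)) := by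
      funext g; simp only [hJ, div_eq_inv_mul]
    rw [hfun]
    exact EInt_o.const_mul_left _
  have sqrt2pos : (0:ℝ) < Real.sqrt 2 := Real.sqrt_pos.mpr (by norm_num)
  have o1 : (fun h : ℝ => c2 * J h) =o[𝓝[>] (0:ℝ)] (fun h => h^6) := Jo.const_mul_left c2
  have o2 : (fun h : ℝ => c3 * J (Real.sqrt 2 * h)) =o[𝓝[>] (0:ℝ)] (fun h => h^6) :=
    (comp _ sqrt2pos J Jo).const_mul_left c3
  have o3 : (fun h : ℝ => c1 * J (2*h)) =o[𝓝[>] (0:ℝ)] (fun h => h^6) :=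
    (comp 2 two_pos J Jo).const_mul_left c1
  have o4 : (fun h : ℝ => c2 * r (b*h)) =o[𝓝[>] (0:ℝ)] (fun h => h^6) :=
    (comp b hbpos r hF).const_mul_left c2
  have o5 : (fun h : ℝ => c3 * r (Real.sqrt 2 * (b*h))) =o[𝓝[>] (0:ℝ)] (fun h => h^6) :=
    (comp b hbpos (fun x => r (Real.sqrt 2 * x)) (comp _ sqrt2pos r hF)).const_mul_left c3
  have o6 : (fun h : ℝ => c1 * r (2*(b*h))) =o[𝓝[>] (0:ℝ)] (fun h => h^6) :=
    (comp b hbpos (fun x => r (2*x)) (comp 2 two_pos r hF)).const_mul_left c1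
  have evEq : (fun h => Ψ h - φ₂ (b * h)
        - (-(24 * (d : ℝ) * ((d : ℝ) + 4)) * τ₆ * (B 6 - (B 4) ^ ((3:ℝ)/2)) * h ^ 6))
      =ᶠ[𝓝[>] (0:ℝ)]
      (fun h => c2 * J h - c3 * J (Real.sqrt 2 * h) - c1 * J (2*h)
        - c2 * r (b*h) + c3 * r (Real.sqrt 2 * (b*h)) + c1 * r (2*(b*h))) := by
    filter_upwards [self_mem_nhdsWithin] with h hh
    have hh0 : (0:ℝ) ≤ h := le_of_lt hh
    have e1 := IFeq h hh0
    have e2 := IFeq (Real.sqrt 2 * h) (by positivity)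
    have e3 := IFeq (2*h) (by positivity)
    rw [hΨ, hφ₂, e1, e2, e3, hFr (b*h), hFr (Real.sqrt 2 * (b*h)), hFr (2*(b*h))]
    have s2 : Real.sqrt 2 ^ 2 = (2:ℝ) := Real.sq_sqrt (by norm_num)
    have s4 : Real.sqrt 2 ^ 4 = (4:ℝ) := by
      calc Real.sqrt 2 ^ 4 = (Real.sqrt 2 ^ 2) ^ 2 := by ring
        _ = 4 := by rw [s2]; norm_num
    have s6 : Real.sqrt 2 ^ 6 = (8:ℝ) := by
      calc Real.sqrt 2 ^ 6 = (Real.sqrt 2 ^ 2) ^ 3 := by ring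
        _ = 8 := by rw [s2]; norm_num
    rw [hc1, hc2, hc3]
    simp only [mul_pow, s2, s4, s6, hb4, hb6]
    ring
  exact evEq.trans_isLittleO (((((o1.sub o2).sub o3).sub o4).add o5).add o6)
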